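/- For real vectors in R^3 representing observations with class labels, define g_k(v_1,...,v_n) = (4/(n(n_k-1))) · Σ_{i<t} 𝟙{(v_{i1}-v_{t1})(v_{i2}-v_{t2}) > 0, v_{i3} = k, v_{t3} = k}, where n_k is the number of indices i with v_{i3} = k. When the third coordinates (class labels) are held fixed, g_k satisfies the bounded differences property in the first two coordinates with constant 4/n. -/

import Mathlib

open Finset
open scoped Classical

/-- Number of sample points whose class label (third coordinate) equals `k`. -/
noncomputable def nClass (n : ℕ) (k : ℝ) (v : Fin n → ℝ × ℝ × ℝ) : ℕ :=
  (Finset.univ.filter fun i => (v i).2.2 = k).card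

/-- The class-`k` empirical Kendall concordance-count function `g_k`. -/
noncomputable def kifGk (n : ℕ) (k : ℝ) (v : Fin n → ℝ × ℝ × ℝ) : ℝ :=
  4 / ((n : ℝ) * ((nClass n k v : ℝ) - 1)) *
    ∑ i : Fin n, ∑ t : Fin n,
      (if i < t ∧ ((v i).1 - (v t).1) * ((v i).2.1 - (v t).2.1) > 0 ∧
          (v i).2.2 = k ∧ (v t).2.2 = k then (1 : ℝ) else 0)

/-- when the class labels are held fixed (the changed point keeps
its label), `g_k` satisfies the bounded differences property with constant `4/n`. -/
theorem stmt3 (n : ℕ) (hn : 2 ≤ n) (k : ℝ) (v v' : Fin n → ℝ × ℝ × ℝ) (m : Fin n)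
    (h : ∀ i, i ≠ m → v i = v' i) (hlab : (v' m).2.2 = (v m).2.2)
    (hnk : 2 ≤ nClass n k v) :
    |kifGk n k v - kifGk n k v'| ≤ 4 / n := by
  classical
  set f : (Fin n → ℝ × ℝ × ℝ) → Fin n → Fin n → ℝ := fun w i t =>
    if i < t ∧ ((w i).1 - (w t).1) * ((w i).2.1 - (w t).2.1) > 0 ∧
        (w i).2.2 = k ∧ (w t).2.2 = k then (1 : ℝ) else 0 with hf
  have hlabeq : ∀ i, (v' i).2.2 = (v i).2.2 := by
    intro i
    by_cases hi : i = m
    · subst hi; exact hlab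
    · rw [h i hi]
  have hN : nClass n k v' = nClass n k v := by
    unfold nClass
    congr 1
    apply Finset.filter_congr
    intro i _
    simp [hlabeq i]
  set N : ℕ := nClass n k v with hNdef
  set c : ℝ := 4 / ((n : ℝ) * ((N : ℝ) - 1)) with hc
  have hn0 : (0:ℝ) < n := by positivity
  have hn0' : (n:ℝ) ≠ 0 := ne_of_gt hn0
  have hN1 : (1:ℝ) ≤ (N:ℝ) - 1 := by
    have : (2:ℝ) ≤ (N:ℝ) := by exact_mod_cast hnk
    linarith
  have hN1' : ((N:ℝ) - 1) ≠ 0 := by linarith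
  have hcpos : 0 ≤ c := by
    rw [hc]; positivity
  set d : Fin n → Fin n → ℝ := fun i t => f v i t - f v' i t with hd
  -- d vanishes off the row/column of m
  have hd0 : ∀ i t, i ≠ m → t ≠ m → d i t = 0 := by
    intro i t hi ht
    simp only [hd, hf]
    rw [h i hi, h t ht]
    ring
  have hdmm : d m m = 0 := by
    simp only [hd, hf]
    rw [if_neg (fun hcon => lt_irrefl m hcon.1), if_neg (fun hcon => lt_irrefl m hcon.1)]
    ring
  -- structural identity
  have hstruct : kifGk n k v - kifGk n k v' =
      c * ∑ j ∈ univ.erase m, (d m j + d j m) := by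
    unfold kifGk
    rw [hN, ← hNdef, ← hc, ← mul_sub]
    congr 1
    have e1 : (∑ i : Fin n, ∑ t : Fin n, f v i t) - (∑ i : Fin n, ∑ t : Fin n, f v' i t)
        = ∑ i : Fin n, ∑ t : Fin n, d i t := by
      rw [← Finset.sum_sub_distrib]
      refine Finset.sum_congr rfl fun i _ => ?_
      rw [← Finset.sum_sub_distrib]
    rw [e1]
    rw [← Finset.sum_erase_add univ _ (mem_univ m)]
    have e2 : ∀ i ∈ univ.erase m, (∑ t : Fin n, d i t) = d i m := by
      intro i hi
      rw [← Finset.sum_erase_add univ _ (mem_univ m)]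
      have : ∑ t ∈ univ.erase m, d i t = 0 := by
        apply Finset.sum_eq_zero
        intro t ht
        exact hd0 i t (Finset.ne_of_mem_erase hi) (Finset.ne_of_mem_erase ht)
      rw [this, zero_add]
    have e3 : (∑ t : Fin n, d m t) = ∑ t ∈ univ.erase m, d m t := by
      rw [← Finset.sum_erase_add univ _ (mem_univ m), hdmm, add_zero]
    rw [Finset.sum_congr rfl e2, e3, Finset.sum_add_distrib]
    ring
  -- pointwise bound
  have hb : ∀ j ∈ univ.erase m,
      |d m j + d j m| ≤ (if (v m).2.2 = k ∧ (v j).2.2 = k then (1:ℝ) else 0) := by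
    intro j hj
    have hjm : j ≠ m := Finset.ne_of_mem_erase hj
    have hvj : v' j = v j := (h j hjm).symm
    simp only [hd, hf]
    by_cases hlk : (v m).2.2 = k ∧ (v j).2.2 = k
    · rw [if_pos hlk]
      rcases hjm.lt_or_gt with hmj | hmj
      · -- j < m, so m < j is false
        have hnm : ¬ m < j := asymm hmj
        rw [if_neg (fun hcon => hnm hcon.1), if_neg (fun hcon => hnm hcon.1)]
        split_ifs <;> norm_num
      · -- m < j, so j < m false
        have hnm : ¬ j < m := asymm hmj
        have hC : ¬ (j < m ∧ ((v j).1 - (v m).1) * ((v j).2.1 - (v m).2.1) > 0 ∧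
            (v j).2.2 = k ∧ (v m).2.2 = k) := fun hcon => hnm hcon.1
        have hD : ¬ (j < m ∧ ((v' j).1 - (v' m).1) * ((v' j).2.1 - (v' m).2.1) > 0 ∧
            (v' j).2.2 = k ∧ (v' m).2.2 = k) := fun hcon => hnm hcon.1
        rw [if_neg hC, if_neg hD]
        split_ifs <;> norm_num
    · rw [if_neg hlk]
      have hA : ¬ (m < j ∧ ((v m).1 - (v j).1) * ((v m).2.1 - (v j).2.1) > 0 ∧
          (v m).2.2 = k ∧ (v j).2.2 = k) := fun hcon => hlk hcon.2.2
      have hB : ¬ (m < j ∧ ((v' m).1 - (v' j).1) * ((v' m).2.1 - (v' j).2.1) > 0 ∧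
          (v' m).2.2 = k ∧ (v' j).2.2 = k) := by
        intro hcon
        exact hlk ⟨hlab ▸ hcon.2.2.1, (hlabeq j) ▸ hcon.2.2.2⟩
      have hC : ¬ (j < m ∧ ((v j).1 - (v m).1) * ((v j).2.1 - (v m).2.1) > 0 ∧
          (v j).2.2 = k ∧ (v m).2.2 = k) := fun hcon => hlk ⟨hcon.2.2.2, hcon.2.2.1⟩
      have hD : ¬ (j < m ∧ ((v' j).1 - (v' m).1) * ((v' j).2.1 - (v' m).2.1) > 0 ∧
          (v' j).2.2 = k ∧ (v' m).2.2 = k) := by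
        intro hcon
        exact hlk ⟨hlab ▸ hcon.2.2.2, (hlabeq j) ▸ hcon.2.2.1⟩
      rw [if_neg hA, if_neg hB, if_neg hC, if_neg hD]
      norm_num
  -- sum of the indicator bound
  have hsum : (∑ j ∈ univ.erase m, (if (v m).2.2 = k ∧ (v j).2.2 = k then (1:ℝ) else 0))
      ≤ (N:ℝ) - 1 := by
    by_cases hmk : (v m).2.2 = k
    · have e : ∀ j ∈ univ.erase m,
          (if (v m).2.2 = k ∧ (v j).2.2 = k then (1:ℝ) else 0)
          = (if (v j).2.2 = k then (1:ℝ) else 0) := by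
        intro j _
        by_cases hjk : (v j).2.2 = k <;> simp [hmk, hjk]
      rw [Finset.sum_congr rfl e, Finset.sum_boole]
      have : (univ.erase m).filter (fun j => (v j).2.2 = k)
          = (univ.filter (fun j => (v j).2.2 = k)).erase m := by
        rw [Finset.filter_erase]
      rw [this]
      have hmem : m ∈ univ.filter (fun j => (v j).2.2 = k) := by
        simp [hmk]
      rw [Finset.card_erase_of_mem hmem]
      have hcard : (univ.filter (fun j => (v j).2.2 = k)).card = N := rfl
      rw [hcard]
      have : 1 ≤ N := by omega
      push_cast [Nat.cast_sub this]
      norm_num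
    · have e : ∀ j ∈ univ.erase m,
          (if (v m).2.2 = k ∧ (v j).2.2 = k then (1:ℝ) else 0) = 0 := by
        intro j _
        rw [if_neg (fun hcon => hmk hcon.1)]
      rw [Finset.sum_congr rfl e, Finset.sum_const, smul_zero]
      linarith
  -- put it together
  rw [hstruct, abs_mul, abs_of_nonneg hcpos]
  have habs : |∑ j ∈ univ.erase m, (d m j + d j m)| ≤ (N:ℝ) - 1 :=
    le_trans (Finset.abs_sum_le_sum_abs _ _) (le_trans (Finset.sum_le_sum hb) hsum)
  calc c * |∑ j ∈ univ.erase m, (d m j + d j m)| ≤ c * ((N:ℝ) - 1) := by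
        exact mul_le_mul_of_nonneg_left habs hcpos
    _ = 4 / n := by
        rw [hc]
        field_simp
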